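/- Let a, b, c, d, p, q, r, s be integers satisfying a·p + b·q = 1 + a·b and c·r + d·s = 1 + c·d, and set v = a·d − b·c. Then (a·(d − r) − b·s)·(c·(b − p) − d·q) = 1 − v·(q·(d − r) − s·(b − p)); in particular the product (a·(d − r) − b·s)·(c·(b − p) − d·q) ≡ 1 (mod v). -/
import Mathlib

theorem product_identity_x3_y3
    (a b c d p q r s : ℤ)
    (hab : a * p + b * q = 1 + a * b)
    (hcd : c * r + d * s = 1 + c * d) :
    (a * (d - r) - b * s) * (c * (b - p) - d * q) =
      1 - (a * d - b * c) * (q * (d - r) - s * (b - p)) ∧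
    (a * (d - r) - b * s) * (c * (b - p) - d * q) ≡ 1 [ZMOD a * d - b * c] := by
  have h : (a * (d - r) - b * s) * (c * (b - p) - d * q) =
      1 - (a * d - b * c) * (q * (d - r) - s * (b - p)) := by
    linear_combination (c * r + d * s - c * d) * hab + hcd
  refine ⟨h, ?_⟩
  rw [h]
  exact (Int.modEq_iff_dvd.mpr ⟨q * (d - r) - s * (b - p), by ring⟩)
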